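/- Let D ⊂ ℝ² be a bounded open set and λ₊, λ₋ ≥ 0. For a Lipschitz function w : closure(D) → ℝ set J(w) = ∫_D ‖∇w‖² dx + λ₊·|{w > 0} ∩ D| + λ₋·|{w < 0} ∩ D|, where ∇w is the almost-everywhere defined Fréchet derivative and |·| denotes Lebesgue measure. Say w is a minimizer subject to its boundary values if J(w) ≤ J(w') for every Lipschitz w' : closure(D) → ℝ with w' = w on ∂D. Suppose u and v are Lipschitz on closure(D), each a minimizer subject to its own boundary values, and u ≤ v on ∂D. Then min(u, v) and max(u, v) are minimizers subject to their respective boundary values (those of u and of v). -/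

import Mathlib

open MeasureTheory Set Metric Filter
open scoped ENNReal NNReal Topology

noncomputable section

/-- Square of the Euclidean norm of the a.e.-defined gradient of `w : ℝ² → ℝ`,
computed from the Fréchet derivative (Lean's `fderiv` is `0` where `w` is not
differentiable, a null set for Lipschitz `w` by Rademacher's theorem). -/
def gradSq (w : ℝ × ℝ → ℝ) (x : ℝ × ℝ) : ℝ :=
  (fderiv ℝ w x (1, 0)) ^ 2 + (fderiv ℝ w x (0, 1)) ^ 2

/-- The two-phase Alt–Caffarelli functional
`J(w) = ∫_D ‖∇w‖² + λ₊ |{w > 0} ∩ D| + λ₋ |{w < 0} ∩ D|`. -/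
def Jfun (D : Set (ℝ × ℝ)) (lp lm : ℝ) (w : ℝ × ℝ → ℝ) : ℝ :=
  (∫ x in D, gradSq w x) + lp * (volume ({x ∈ D | 0 < w x})).toReal
    + lm * (volume ({x ∈ D | w x < 0})).toReal

/-- `w` is Lipschitz on the closure of `D`. -/
def LipOnClosure (D : Set (ℝ × ℝ)) (w : ℝ × ℝ → ℝ) : Prop :=
  ∃ K : NNReal, LipschitzOnWith K w (closure D)

/-- `w` is a minimizer of `J` over `D` subject to its own boundary values, among
Lipschitz competitors. -/
def IsMinimizerJ (D : Set (ℝ × ℝ)) (lp lm : ℝ) (w : ℝ × ℝ → ℝ) : Prop :=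
  LipOnClosure D w ∧ ∀ w' : ℝ × ℝ → ℝ, LipOnClosure D w' →
    (∀ x ∈ frontier D, w' x = w x) → Jfun D lp lm w ≤ Jfun D lp lm w'

/-- The derivative of a Lipschitz function vanishes a.e. on its zero set. -/
lemma fderiv_ae_zero_of_zero {f : ℝ × ℝ → ℝ} {K : NNReal} (hf : LipschitzWith K f) :
    ∀ᵐ x : ℝ × ℝ, f x = 0 → fderiv ℝ f x = 0 := by
  set S : Set (ℝ × ℝ) := {y | f y = 0} with hSdef
  have hdens := Besicovitch.ae_tendsto_measure_inter_div (volume : Measure (ℝ × ℝ)) S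
  filter_upwards [ae_imp_of_ae_restrict hdens, hf.ae_differentiableAt] with x hx hd hfx
  by_contra hL
  set L := fderiv ℝ f x with hLdef
  have hLpos : (0:ℝ) < ‖L‖ := norm_pos_iff.2 hL
  obtain ⟨e, he1, heL⟩ := L.exists_lt_apply_of_lt_opNorm (half_lt_self hLpos)
  have hder : HasFDerivAt f L x := hd.hasFDerivAt
  have hlo := hder.isLittleO.def (show (0:ℝ) < ‖L‖/4 by positivity)
  obtain ⟨δ, hδpos, hδ⟩ := Metric.eventually_nhds_iff.1 hlo
  have key : ∀ r : ℝ, r ∈ Set.Ioc (0:ℝ) (δ/2) →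
      volume (S ∩ closedBall x r) / volume (closedBall x r) ≤ ENNReal.ofReal (63/64) := by
    rintro r ⟨hr, hrδ⟩
    set c := x + (3*r/4) • e with hcdef
    have hcx : ‖c - x‖ ≤ 3*r/4 := by
      have : c - x = (3*r/4) • e := by rw [hcdef]; abel
      rw [this, norm_smul, Real.norm_eq_abs, abs_of_nonneg (by positivity)]
      calc 3*r/4 * ‖e‖ ≤ 3*r/4 * 1 := mul_le_mul_of_nonneg_left he1.le (by positivity)
        _ = 3*r/4 := mul_one _
    have hsub : ball c (r/8) ⊆ closedBall x r := by
      intro y hy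
      rw [mem_ball, dist_eq_norm] at hy
      rw [mem_closedBall, dist_eq_norm]
      calc ‖y - x‖ = ‖(y - c) + (c - x)‖ := by abel_nf
        _ ≤ ‖y - c‖ + ‖c - x‖ := norm_add_le _ _
        _ ≤ r := by linarith
    have hdisj : Disjoint (S ∩ closedBall x r) (ball c (r/8)) := by
      rw [Set.disjoint_left]
      rintro y ⟨hyS, _⟩ hyb
      rw [mem_ball, dist_eq_norm] at hyb
      have hyc : ‖y - x - (3*r/4) • e‖ < r/8 := by
        have : y - x - (3*r/4) • e = y - c := by rw [hcdef]; abel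
        rwa [this]
      have hnorm_le : ‖y - x‖ ≤ 7*r/8 := by
        have h1 : ‖y - x‖ ≤ ‖y - x - (3*r/4) • e‖ + ‖(3*r/4) • e‖ := by
          calc ‖y - x‖ = ‖(y - x - (3*r/4) • e) + (3*r/4) • e‖ := by abel_nf
            _ ≤ _ := norm_add_le _ _
        have h2 : ‖(3*r/4) • e‖ ≤ 3*r/4 := by
          rw [norm_smul, Real.norm_eq_abs, abs_of_nonneg (by positivity)]
          calc 3*r/4 * ‖e‖ ≤ 3*r/4 * 1 := mul_le_mul_of_nonneg_left he1.le (by positivity)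
            _ = 3*r/4 := mul_one _
        linarith
      have hLe : ‖L ((3*r/4) • e)‖ = (3*r/4) * ‖L e‖ := by
        rw [L.map_smul, norm_smul, Real.norm_eq_abs, abs_of_nonneg (by positivity)]
      have hdiff : ‖L (y - x) - L ((3*r/4) • e)‖ ≤ ‖L‖ * (r/8) := by
        rw [← map_sub]
        calc ‖L (y - x - (3*r/4) • e)‖ ≤ ‖L‖ * ‖y - x - (3*r/4) • e‖ := L.le_opNorm _
          _ ≤ ‖L‖ * (r/8) := mul_le_mul_of_nonneg_left hyc.le (norm_nonneg _)
      have hLlow : ‖L‖ * r / 4 < ‖L (y - x)‖ := by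
        have h3 : ‖L ((3*r/4) • e)‖ - ‖L (y - x) - L ((3*r/4) • e)‖ ≤ ‖L (y - x)‖ := by
          calc ‖L ((3*r/4) • e)‖ - ‖L (y - x) - L ((3*r/4) • e)‖
              ≤ ‖L ((3*r/4) • e) - (L ((3*r/4) • e) - L (y - x))‖ := by
                have h0 := norm_sub_norm_le (L ((3*r/4) • e)) (L ((3*r/4) • e) - L (y - x))
                have heq : ‖L ((3*r/4) • e) - L (y - x)‖ = ‖L (y - x) - L ((3*r/4) • e)‖ :=
                  norm_sub_rev _ _
                linarith
            _ = ‖L (y - x)‖ := by congr 1; abel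
        have h5 : (3*r/4) * (‖L‖/2) < (3*r/4) * ‖L e‖ :=
          mul_lt_mul_of_pos_left heL (by positivity)
        rw [hLe] at h3
        linarith
      have hyδ : dist y x < δ := by
        rw [dist_eq_norm]; linarith
      have hδy := hδ hyδ
      have hfy : f y = 0 := hyS
      rw [hfy, hfx, sub_zero, zero_sub, norm_neg] at hδy
      have hup : ‖L (y - x)‖ ≤ ‖L‖/4 * (7*r/8) := by
        calc ‖L (y - x)‖ ≤ ‖L‖/4 * ‖y - x‖ := hδy
          _ ≤ ‖L‖/4 * (7*r/8) := mul_le_mul_of_nonneg_left hnorm_le (by positivity)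
      have hpos : 0 < ‖L‖ * r := mul_pos hLpos hr
      linarith
    have hA0 : volume (closedBall x r) ≠ 0 := (measure_closedBall_pos volume x hr).ne'
    have hAtop : volume (closedBall x r) ≠ ⊤ := measure_closedBall_lt_top.ne
    have hball : volume (ball c (r/8)) = ENNReal.ofReal (1/64) * volume (closedBall x r) := by
      have h1 : volume (ball c ((1/8)*r))
          = ENNReal.ofReal ((1/8:ℝ)^(Module.finrank ℝ (ℝ×ℝ))) * volume (ball (0:ℝ×ℝ) r) :=
        Measure.addHaar_ball_mul volume c (by norm_num) r
      have h2 : volume (closedBall x r) = volume (ball (0:ℝ×ℝ) r) := by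
        rw [Measure.addHaar_closedBall_eq_addHaar_ball, Measure.addHaar_ball_center]
      have h3 : Module.finrank ℝ (ℝ×ℝ) = 2 := by
        simp [Module.finrank_prod]
      rw [show r/8 = (1/8)*r by ring, h1, h2, h3]
      norm_num
    have hsum : volume (S ∩ closedBall x r) + ENNReal.ofReal (1/64) * volume (closedBall x r)
        ≤ volume (closedBall x r) := by
      rw [← hball, ← measure_union hdisj measurableSet_ball]
      exact measure_mono (union_subset inter_subset_right hsub)
    have hsplit : volume (closedBall x r)
        = ENNReal.ofReal (63/64) * volume (closedBall x r)
          + ENNReal.ofReal (1/64) * volume (closedBall x r) := by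
      rw [← add_mul, ← ENNReal.ofReal_add (by norm_num) (by norm_num)]
      norm_num
    have hfin : ENNReal.ofReal (1/64) * volume (closedBall x r) ≠ ⊤ :=
      ENNReal.mul_ne_top ENNReal.ofReal_ne_top hAtop
    have hsum' : volume (S ∩ closedBall x r) + ENNReal.ofReal (1/64) * volume (closedBall x r)
        ≤ ENNReal.ofReal (63/64) * volume (closedBall x r)
          + ENNReal.ofReal (1/64) * volume (closedBall x r) := by
      rw [← hsplit]; exact hsum
    have hle : volume (S ∩ closedBall x r)
        ≤ ENNReal.ofReal (63/64) * volume (closedBall x r) :=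
      (WithTop.add_le_add_iff_right hfin).1 hsum'
    calc volume (S ∩ closedBall x r) / volume (closedBall x r)
        ≤ ENNReal.ofReal (63/64) * volume (closedBall x r) / volume (closedBall x r) :=
          ENNReal.div_le_div_right hle _
      _ = ENNReal.ofReal (63/64) := by
          rw [mul_div_assoc, ENNReal.div_self hA0 hAtop, mul_one]
  have hone : (1:ℝ≥0∞) ≤ ENNReal.ofReal (63/64) := by
    refine le_of_tendsto (hx hfx) ?_
    filter_upwards [Ioc_mem_nhdsGT_of_mem ⟨le_refl (0:ℝ), half_pos hδpos⟩] with r hr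
    exact key r hr
  have : ENNReal.ofReal (63/64) < 1 := by
    rw [← ENNReal.ofReal_one]
    exact ENNReal.ofReal_lt_ofReal_iff (by norm_num) |>.2 (by norm_num)
  exact absurd hone (not_le.2 this)

/-- Derivatives of two Lipschitz functions agree a.e. on their agreement set. -/
lemma fderiv_ae_eq_on_eq {f g : ℝ × ℝ → ℝ} {Kf Kg : NNReal}
    (hf : LipschitzWith Kf f) (hg : LipschitzWith Kg g) :
    ∀ᵐ x : ℝ × ℝ, f x = g x → fderiv ℝ f x = fderiv ℝ g x := by
  filter_upwards [fderiv_ae_zero_of_zero (hf.sub hg), hf.ae_differentiableAt,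
    hg.ae_differentiableAt] with x h0 hdf hdg hfg
  have h1 : fderiv ℝ (fun y => f y - g y) x = 0 := h0 (by simp [hfg])
  rw [fderiv_fun_sub hdf hdg] at h1
  have := sub_eq_zero.1 h1
  exact this

lemma gradSq_nonneg (w : ℝ × ℝ → ℝ) (x : ℝ × ℝ) : 0 ≤ gradSq w x := by
  unfold gradSq; positivity

lemma gradSq_meas (w : ℝ × ℝ → ℝ) : Measurable (gradSq w) := by
  have m1 : Measurable fun x => fderiv ℝ w x (1, 0) := measurable_fderiv_apply_const ℝ w _
  have m2 : Measurable fun x => fderiv ℝ w x (0, 1) := measurable_fderiv_apply_const ℝ w _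
  exact (m1.pow_const 2).add (m2.pow_const 2)

lemma gradSq_bound {w : ℝ × ℝ → ℝ} {K : NNReal} (hw : LipschitzWith K w) (x : ℝ × ℝ) :
    gradSq w x ≤ 2 * (K:ℝ)^2 := by
  have hn : ‖fderiv ℝ w x‖ ≤ (K:ℝ) := norm_fderiv_le_of_lipschitz ℝ hw
  have h10 : ‖((1:ℝ), (0:ℝ))‖ = 1 := by simp [Prod.norm_def]
  have h01 : ‖((0:ℝ), (1:ℝ))‖ = 1 := by simp [Prod.norm_def]
  have b1 : |fderiv ℝ w x (1, 0)| ≤ (K:ℝ) := by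
    calc |fderiv ℝ w x (1, 0)| = ‖fderiv ℝ w x (1, 0)‖ := rfl
      _ ≤ ‖fderiv ℝ w x‖ * ‖((1:ℝ), (0:ℝ))‖ := (fderiv ℝ w x).le_opNorm _
      _ ≤ (K:ℝ) := by rw [h10, mul_one]; exact hn
  have b2 : |fderiv ℝ w x (0, 1)| ≤ (K:ℝ) := by
    calc |fderiv ℝ w x (0, 1)| = ‖fderiv ℝ w x (0, 1)‖ := rfl
      _ ≤ ‖fderiv ℝ w x‖ * ‖((0:ℝ), (1:ℝ))‖ := (fderiv ℝ w x).le_opNorm _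
      _ ≤ (K:ℝ) := by rw [h01, mul_one]; exact hn
  have s1 : (fderiv ℝ w x (1, 0))^2 ≤ (K:ℝ)^2 := by
    rw [← sq_abs]; exact pow_le_pow_left₀ (abs_nonneg _) b1 2
  have s2 : (fderiv ℝ w x (0, 1))^2 ≤ (K:ℝ)^2 := by
    rw [← sq_abs]; exact pow_le_pow_left₀ (abs_nonneg _) b2 2
  unfold gradSq; linarith

lemma integrableOn_gradSq {w : ℝ × ℝ → ℝ} {K : NNReal} {D : Set (ℝ × ℝ)}
    (hw : LipschitzWith K w) (hD : volume D ≠ ⊤) : IntegrableOn (gradSq w) D := by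
  have hC : IntegrableOn (fun _ : ℝ × ℝ => 2*(K:ℝ)^2) D volume :=
    integrableOn_const hD
  refine Integrable.mono' hC ((gradSq_meas w).aestronglyMeasurable) ?_
  refine ae_of_all _ fun x => ?_
  rw [Real.norm_eq_abs, abs_of_nonneg (gradSq_nonneg w x)]
  exact gradSq_bound hw x

lemma Jfun_congr {D : Set (ℝ × ℝ)} (hD : IsOpen D) {lp lm : ℝ} {w w' : ℝ × ℝ → ℝ}
    (h : EqOn w w' D) : Jfun D lp lm w = Jfun D lp lm w' := by
  unfold Jfun
  have h1 : ∫ x in D, gradSq w x = ∫ x in D, gradSq w' x := by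
    refine setIntegral_congr_fun hD.measurableSet fun x hx => ?_
    have he : w =ᶠ[nhds x] w' := eventuallyEq_of_mem (hD.mem_nhds hx) h
    unfold gradSq; rw [he.fderiv_eq]
  have h2 : {x ∈ D | 0 < w x} = {x ∈ D | 0 < w' x} := by
    ext y; exact and_congr_right fun hy => by rw [h hy]
  have h3 : {x ∈ D | w x < 0} = {x ∈ D | w' x < 0} := by
    ext y; exact and_congr_right fun hy => by rw [h hy]
  rw [h1, h2, h3]

lemma J_min_max_add {D : Set (ℝ × ℝ)} {lp lm : ℝ} (hD : IsOpen D) (hDf : volume D ≠ ⊤)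
    {u v : ℝ × ℝ → ℝ} {Ku Kv : NNReal} (hu : LipschitzWith Ku u) (hv : LipschitzWith Kv v) :
    Jfun D lp lm (fun x => min (u x) (v x)) + Jfun D lp lm (fun x => max (u x) (v x))
      = Jfun D lp lm u + Jfun D lp lm v := by
  set m : ℝ × ℝ → ℝ := fun x => min (u x) (v x) with hmdef
  set M : ℝ × ℝ → ℝ := fun x => max (u x) (v x) with hMdef
  have hm : LipschitzWith (max Ku Kv) m := hu.min hv
  have hM : LipschitzWith (max Ku Kv) M := hu.max hv
  -- gradient identity a.e.
  have hae : ∀ᵐ x : ℝ × ℝ, gradSq m x + gradSq M x = gradSq u x + gradSq v x := by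
    filter_upwards [fderiv_ae_eq_on_eq hm hu, fderiv_ae_eq_on_eq hM hv,
      fderiv_ae_eq_on_eq hm hv, fderiv_ae_eq_on_eq hM hu] with x h1 h2 h3 h4
    rcases le_total (u x) (v x) with hc | hc
    · have e1 : gradSq m x = gradSq u x := by
        unfold gradSq; rw [h1 (min_eq_left hc)]
      have e2 : gradSq M x = gradSq v x := by
        unfold gradSq; rw [h2 (max_eq_right hc)]
      rw [e1, e2]
    · have e1 : gradSq m x = gradSq v x := by
        unfold gradSq; rw [h3 (min_eq_right hc)]
      have e2 : gradSq M x = gradSq u x := by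
        unfold gradSq; rw [h4 (max_eq_left hc)]
      rw [e1, e2]; ring
  have hIm := integrableOn_gradSq hm hDf
  have hIM := integrableOn_gradSq hM hDf
  have hIu := integrableOn_gradSq hu hDf
  have hIv := integrableOn_gradSq hv hDf
  have hint : (∫ x in D, gradSq m x) + (∫ x in D, gradSq M x)
      = (∫ x in D, gradSq u x) + (∫ x in D, gradSq v x) := by
    rw [← integral_add hIm hIM, ← integral_add hIu hIv]
    exact integral_congr_ae (ae_restrict_of_ae hae)
  -- measurability of level sets
  have hms : ∀ (w : ℝ × ℝ → ℝ), LipschitzWith Ku w ∨ LipschitzWith Kv w → True := fun _ _ => trivial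
  have measu : MeasurableSet {x ∈ D | 0 < u x} :=
    hD.measurableSet.inter (measurableSet_lt measurable_const hu.continuous.measurable)
  have measv : MeasurableSet {x ∈ D | 0 < v x} :=
    hD.measurableSet.inter (measurableSet_lt measurable_const hv.continuous.measurable)
  have measu' : MeasurableSet {x ∈ D | u x < 0} :=
    hD.measurableSet.inter (measurableSet_lt hu.continuous.measurable measurable_const)
  have measv' : MeasurableSet {x ∈ D | v x < 0} :=
    hD.measurableSet.inter (measurableSet_lt hv.continuous.measurable measurable_const)
  -- finiteness
  have hfin : ∀ s : Set (ℝ × ℝ), s ⊆ D → volume s ≠ ⊤ :=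
    fun s hs => ((measure_mono hs).trans_lt hDf.lt_top).ne
  -- positive part
  have eP1 : {x ∈ D | 0 < m x} = {x ∈ D | 0 < u x} ∩ {x ∈ D | 0 < v x} := by
    ext y; simp only [hmdef, mem_setOf_eq, mem_inter_iff, lt_min_iff]; tauto
  have eP2 : {x ∈ D | 0 < M x} = {x ∈ D | 0 < u x} ∪ {x ∈ D | 0 < v x} := by
    ext y; simp only [hMdef, mem_setOf_eq, mem_union, lt_max_iff]; tauto
  have hP : volume {x ∈ D | 0 < M x} + volume {x ∈ D | 0 < m x}
      = volume {x ∈ D | 0 < u x} + volume {x ∈ D | 0 < v x} := by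
    rw [eP1, eP2]; exact measure_union_add_inter _ measv
  have hPr : (volume {x ∈ D | 0 < m x}).toReal + (volume {x ∈ D | 0 < M x}).toReal
      = (volume {x ∈ D | 0 < u x}).toReal + (volume {x ∈ D | 0 < v x}).toReal := by
    have := congrArg ENNReal.toReal hP
    rw [ENNReal.toReal_add (hfin _ (sep_subset _ _)) (hfin _ (sep_subset _ _)),
      ENNReal.toReal_add (hfin _ (sep_subset _ _)) (hfin _ (sep_subset _ _))] at this
    linarith
  -- negative part
  have eN1 : {x ∈ D | m x < 0} = {x ∈ D | u x < 0} ∪ {x ∈ D | v x < 0} := by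
    ext y; simp only [hmdef, mem_setOf_eq, mem_union, min_lt_iff]; tauto
  have eN2 : {x ∈ D | M x < 0} = {x ∈ D | u x < 0} ∩ {x ∈ D | v x < 0} := by
    ext y; simp only [hMdef, mem_setOf_eq, mem_inter_iff, max_lt_iff]; tauto
  have hN : volume {x ∈ D | m x < 0} + volume {x ∈ D | M x < 0}
      = volume {x ∈ D | u x < 0} + volume {x ∈ D | v x < 0} := by
    rw [eN1, eN2]; exact measure_union_add_inter _ measv'
  have hNr : (volume {x ∈ D | m x < 0}).toReal + (volume {x ∈ D | M x < 0}).toReal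
      = (volume {x ∈ D | u x < 0}).toReal + (volume {x ∈ D | v x < 0}).toReal := by
    have := congrArg ENNReal.toReal hN
    rw [ENNReal.toReal_add (hfin _ (sep_subset _ _)) (hfin _ (sep_subset _ _)),
      ENNReal.toReal_add (hfin _ (sep_subset _ _)) (hfin _ (sep_subset _ _))] at this
    linarith
  unfold Jfun
  linear_combination hint + lp * hPr + lm * hNr

/-- Lattice principle: if `u` and `v` are minimizers of the two-phase functional on a
bounded open set `D ⊂ ℝ²` subject to their own boundary values and `u ≤ v` on `∂D`,
then `min(u,v)` and `max(u,v)` are minimizers subject to their respective boundary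
values. -/
theorem lattice_principle (D : Set (ℝ × ℝ)) (hD : IsOpen D)
    (hDb : Bornology.IsBounded D) (lp lm : ℝ) (hlp : 0 ≤ lp) (hlm : 0 ≤ lm)
    (u v : ℝ × ℝ → ℝ) (hu : IsMinimizerJ D lp lm u) (hv : IsMinimizerJ D lp lm v)
    (hb : ∀ x ∈ frontier D, u x ≤ v x) :
    IsMinimizerJ D lp lm (fun x => min (u x) (v x)) ∧
    IsMinimizerJ D lp lm (fun x => max (u x) (v x)) := by
  obtain ⟨⟨Ku, huK⟩, humin⟩ := hu
  obtain ⟨⟨Kv, hvK⟩, hvmin⟩ := hv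
  obtain ⟨U, hU, hUeq⟩ := huK.extend_real
  obtain ⟨V, hV, hVeq⟩ := hvK.extend_real
  set m : ℝ × ℝ → ℝ := fun x => min (u x) (v x) with hmdef
  set M : ℝ × ℝ → ℝ := fun x => max (u x) (v x) with hMdef
  have hDfin : volume D ≠ ⊤ := hDb.measure_lt_top.ne
  -- Lipschitz on closure for m and M
  have hmLip : LipOnClosure D m := by
    refine ⟨max Ku Kv, fun x hx y hy => ?_⟩
    have h := ((hU.min hV).lipschitzOnWith (s := closure D)) hx hy
    have ex : m x = min (U x) (V x) := by simp only [hmdef]; rw [hUeq hx, hVeq hx]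
    have ey : m y = min (U y) (V y) := by simp only [hmdef]; rw [hUeq hy, hVeq hy]
    rw [ex, ey]; exact h
  have hMLip : LipOnClosure D M := by
    refine ⟨max Ku Kv, fun x hx y hy => ?_⟩
    have h := ((hU.max hV).lipschitzOnWith (s := closure D)) hx hy
    have ex : M x = max (U x) (V x) := by simp only [hMdef]; rw [hUeq hx, hVeq hx]
    have ey : M y = max (U y) (V y) := by simp only [hMdef]; rw [hUeq hy, hVeq hy]
    rw [ex, ey]; exact h
  -- J values via extensions
  have hDsub : D ⊆ closure D := subset_closure
  have Jm_eq : Jfun D lp lm m = Jfun D lp lm (fun x => min (U x) (V x)) :=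
    Jfun_congr hD fun x hx => by
      simp only [hmdef]; rw [hUeq (hDsub hx), hVeq (hDsub hx)]
  have JM_eq : Jfun D lp lm M = Jfun D lp lm (fun x => max (U x) (V x)) :=
    Jfun_congr hD fun x hx => by
      simp only [hMdef]; rw [hUeq (hDsub hx), hVeq (hDsub hx)]
  have Ju_eq : Jfun D lp lm u = Jfun D lp lm U :=
    Jfun_congr hD fun x hx => hUeq (hDsub hx)
  have Jv_eq : Jfun D lp lm v = Jfun D lp lm V :=
    Jfun_congr hD fun x hx => hVeq (hDsub hx)
  have key : Jfun D lp lm m + Jfun D lp lm M = Jfun D lp lm u + Jfun D lp lm v := by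
    rw [Jm_eq, JM_eq, Ju_eq, Jv_eq]
    exact J_min_max_add hD hDfin hU hV
  -- boundary values
  have hmb : ∀ x ∈ frontier D, m x = u x := fun x hx => min_eq_left (hb x hx)
  have hMb : ∀ x ∈ frontier D, M x = v x := fun x hx => max_eq_right (hb x hx)
  -- minimality of u and v against m and M
  have hJum : Jfun D lp lm u ≤ Jfun D lp lm m := humin m hmLip hmb
  have hJvM : Jfun D lp lm v ≤ Jfun D lp lm M := hvmin M hMLip hMb
  have hJm : Jfun D lp lm m = Jfun D lp lm u := by linarith
  have hJM : Jfun D lp lm M = Jfun D lp lm v := by linarith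
  constructor
  · refine ⟨hmLip, fun w' hw' hwb => ?_⟩
    rw [hJm]
    exact humin w' hw' fun x hx => (hwb x hx).trans (hmb x hx)
  · refine ⟨hMLip, fun w' hw' hwb => ?_⟩
    rw [hJM]
    exact hvmin w' hw' fun x hx => (hwb x hx).trans (hMb x hx)
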